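/- In the Fock space F²₂, for every f(z) = Σ_{s=0}^n a_s z^{s+τ} conj(z)^s with τ ≥ 0, the Berezin transform B₂f again has this form (with the same τ and degree ≤ n), and the map B₂ restricted to H_{n,τ} = {Σ_{s=0}^n a_s z^{s+τ} conj(z)^s} is a linear bijection of H_{n,τ} onto itself. -/

import Mathlib

open MeasureTheory

noncomputable section BerezinAuxPre

open Finset



/-- The Gaussian-weighted monomial. -/
def gwt (j k : ℕ) (ξ : ℂ) : ℂ :=
  ξ ^ j * (starRingEnd ℂ ξ) ^ k * (Real.exp (-‖ξ‖ ^ 2) : ℂ)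

lemma gwt_continuous (j k : ℕ) : Continuous (gwt j k) := by
  unfold gwt
  exact ((continuous_pow j).mul ((Complex.continuous_conj).pow k)).mul
    (Complex.continuous_ofReal.comp (Real.continuous_exp.comp ((continuous_norm.pow 2).neg)))

lemma pow_mul_exp_bound (m : ℕ) {x : ℝ} (hx : 0 ≤ x) :
    x ^ m * Real.exp (-x ^ 2) ≤
      (1 + 2 ^ m * m.factorial) * Real.exp (-(1 / 2 : ℝ) * x ^ 2) := by
  have hfac : (0 : ℝ) < m.factorial := by positivity
  have h3 : (x ^ 2 / 2) ^ m ≤ m.factorial * Real.exp (x ^ 2 / 2) := by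
    have := Real.pow_div_factorial_le_exp (x := x ^ 2 / 2) (by positivity) m
    rw [div_le_iff₀ hfac] at this
    linarith [this]
  have h1 : x ^ m ≤ 1 + 2 ^ m * ((x ^ 2 / 2) ^ m) := by
    have h2 : (2 : ℝ) ^ m * ((x ^ 2 / 2) ^ m) = x ^ (2 * m) := by
      rw [← mul_pow, pow_mul]
      ring_nf
    rw [h2]
    rcases le_total x 1 with h | h
    · have : x ^ m ≤ 1 := pow_le_one₀ hx h
      have : (0:ℝ) ≤ x ^ (2*m) := by positivity
      linarith
    · have : x ^ m ≤ x ^ (2 * m) := pow_le_pow_right₀ h (by omega)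
      linarith
  have hexp1 : Real.exp (-x ^ 2) ≤ Real.exp (-(1/2 : ℝ) * x ^ 2) := by
    apply Real.exp_le_exp.2; nlinarith [sq_nonneg x]
  have hE : (0:ℝ) < Real.exp (-x ^ 2) := Real.exp_pos _
  calc x ^ m * Real.exp (-x ^ 2)
      ≤ (1 + 2 ^ m * (m.factorial * Real.exp (x ^ 2 / 2))) * Real.exp (-x ^ 2) := by
        apply mul_le_mul_of_nonneg_right _ hE.le
        calc x ^ m ≤ 1 + 2 ^ m * ((x ^ 2 / 2) ^ m) := h1
          _ ≤ 1 + 2 ^ m * (m.factorial * Real.exp (x ^ 2 / 2)) := by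
              have : (0:ℝ) ≤ (2:ℝ) ^ m := by positivity
              nlinarith
    _ = Real.exp (-x ^ 2) + 2 ^ m * m.factorial * Real.exp (x ^ 2 / 2 + -x ^ 2) := by
        rw [Real.exp_add]
        ring
    _ ≤ Real.exp (-(1/2 : ℝ) * x ^ 2) + 2 ^ m * m.factorial * Real.exp (-(1/2 : ℝ) * x ^ 2) := by
        have : x ^ 2 / 2 + -x ^ 2 = -(1/2 : ℝ) * x ^ 2 := by ring
        rw [this]
        gcongr
    _ = (1 + 2 ^ m * m.factorial) * Real.exp (-(1 / 2 : ℝ) * x ^ 2) := by ring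

lemma gwt_integrable (j k : ℕ) : Integrable (gwt j k) := by
  have hg : Integrable (fun ξ : ℂ =>
      (1 + 2 ^ (j + k) * (j + k).factorial : ℝ) * Real.exp (-(1/2 : ℝ) * ‖ξ‖ ^ 2)) := by
    apply Integrable.const_mul
    have h := (GaussianFourier.integrable_cexp_neg_mul_sq_norm_add
      (V := ℂ) (b := (1/2 : ℂ)) (by norm_num) 0 0).norm
    apply h.congr'
    · exact (by fun_prop : Continuous fun ξ : ℂ => Real.exp (-(1/2:ℝ) * ‖ξ‖^2)).aestronglyMeasurable
    · filter_upwards with ξ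
      rw [Complex.norm_exp]
      congr 1
      simp [← Complex.ofReal_pow]
  apply hg.mono' ((gwt_continuous j k).aestronglyMeasurable)
  filter_upwards with ξ
  have habs : ‖gwt j k ξ‖ = ‖ξ‖ ^ (j + k) * Real.exp (-‖ξ‖ ^ 2) := by
    unfold gwt
    rw [norm_mul, norm_mul, norm_pow, norm_pow,
      Complex.norm_conj, Complex.norm_real, Real.norm_eq_abs,
      abs_of_pos (Real.exp_pos _), pow_add]
  rw [habs]
  exact pow_mul_exp_bound (j + k) (norm_nonneg ξ)

def mu (j k : ℕ) : ℂ := ∫ ξ : ℂ, gwt j k ξ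

lemma mu_rot (j k : ℕ) (u : Circle) :
    (u : ℂ) ^ j * (starRingEnd ℂ (u : ℂ)) ^ k * mu j k = mu j k := by
  have h : (∫ ξ : ℂ, gwt j k (rotation u ξ)) = mu j k :=
    MeasureTheory.integral_comp (rotation u) (gwt j k)
  have h2 : ∀ ξ : ℂ, gwt j k (rotation u ξ) =
      (u : ℂ) ^ j * (starRingEnd ℂ (u : ℂ)) ^ k * gwt j k ξ := by
    intro ξ
    unfold gwt
    rw [rotation_apply, map_mul, mul_pow, mul_pow]
    have : ‖(u : ℂ) * ξ‖ = ‖ξ‖ := by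
      rw [norm_mul, Circle.norm_coe, one_mul]
    rw [this]
    ring
  have h3 : (∫ ξ : ℂ, gwt j k ((rotation u) ξ))
      = (u : ℂ) ^ j * (starRingEnd ℂ (u : ℂ)) ^ k * mu j k := by
    simp_rw [h2]
    rw [MeasureTheory.integral_const_mul]
    rfl
  rw [← h3, h]

lemma mu_eq_zero {j k : ℕ} (hjk : j ≠ k) : mu j k = 0 := by
  have hne : (j : ℝ) - k ≠ 0 := by
    intro h
    apply hjk
    have : (j : ℝ) = k := by linarith
    exact_mod_cast this
  set θ : ℝ := Real.pi / ((j : ℝ) - k) with hθ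
  have key := mu_rot j k (Circle.exp θ)
  have hc : ((Circle.exp θ : ℂ)) ^ j * (starRingEnd ℂ (Circle.exp θ : ℂ)) ^ k = -1 := by
    rw [Circle.coe_exp]
    rw [← Complex.exp_conj]
    rw [map_mul, Complex.conj_ofReal, Complex.conj_I]
    rw [← Complex.exp_nat_mul, ← Complex.exp_nat_mul, ← Complex.exp_add]
    have harg : (j : ℂ) * (θ * Complex.I) + (k : ℂ) * (θ * -Complex.I)
        = (((j : ℝ) - k) * θ : ℝ) * Complex.I := by
      push_cast
      ring
    rw [harg]
    have : ((j : ℝ) - k) * θ = Real.pi := by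
      rw [hθ]
      field_simp
    rw [this, Complex.exp_pi_mul_I]
  rw [hc] at key
  have : (2 : ℂ) * mu j k = 0 := by linear_combination -key
  simpa using this

lemma mu_zero_zero : mu 0 0 = (Real.pi : ℂ) := by
  unfold mu gwt
  simp only [pow_zero, one_mul]
  have h : ∀ ξ : ℂ, ((Real.exp (-‖ξ‖ ^ 2) : ℝ) : ℂ)
      = Complex.exp (-(1:ℂ) * (‖ξ‖ : ℂ) ^ 2) := by
    intro ξ
    rw [Complex.ofReal_exp]
    congr 1
    push_cast
    ring
  simp_rw [h]
  rw [GaussianFourier.integral_cexp_neg_mul_sq_norm (by norm_num : (0:ℝ) < (1:ℂ).re)]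
  rw [Complex.finrank_real_complex]
  norm_num

end BerezinAuxPre

/-- The Berezin transform on the Fock space `F²₂`, with `dA = r dr dθ/(2π)`. -/
noncomputable def berezin2 (f : ℂ → ℂ) (z : ℂ) : ℂ :=
  2 * ((2 * Real.pi)⁻¹ : ℝ) *
    ∫ ξ : ℂ, f (z + ξ) * (Real.exp (-‖ξ‖ ^ 2) : ℂ)

/-- The space `H_{n,τ}` of polynomials `Σ_{s=0}^n a_s z^{s+τ} conj(z)^s`. -/
def Hspace (n τ : ℕ) : Set (ℂ → ℂ) :=
  {f | ∃ a : ℕ → ℂ, ∀ z, f z =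
    ∑ s ∈ Finset.range (n + 1), a s * z ^ (s + τ) * (starRingEnd ℂ z) ^ s}

noncomputable section BerezinAuxPost

lemma expand_eq (a b : ℕ) (z ξ : ℂ) :
    (z + ξ) ^ a * (starRingEnd ℂ (z + ξ)) ^ b * (Real.exp (-‖ξ‖ ^ 2) : ℂ)
    = ∑ j ∈ Finset.range (a + 1), ∑ k ∈ Finset.range (b + 1),
        ((a.choose j : ℂ) * (b.choose k : ℂ) * z ^ (a - j) * (starRingEnd ℂ z) ^ (b - k))
          * gwt j k ξ := by
  rw [map_add, show z + ξ = ξ + z from add_comm z ξ,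
    show starRingEnd ℂ z + starRingEnd ℂ ξ = starRingEnd ℂ ξ + starRingEnd ℂ z from
      add_comm _ _, add_pow, add_pow, Finset.sum_mul_sum, Finset.sum_mul]
  apply Finset.sum_congr rfl
  intro j _
  rw [Finset.sum_mul]
  apply Finset.sum_congr rfl
  intro k _
  unfold gwt
  ring

lemma integrable_expand (a b : ℕ) (z : ℂ) :
    Integrable (fun ξ : ℂ => (z + ξ) ^ a * (starRingEnd ℂ (z + ξ)) ^ b
      * (Real.exp (-‖ξ‖ ^ 2) : ℂ)) := by
  have h : (fun ξ : ℂ => (z + ξ) ^ a * (starRingEnd ℂ (z + ξ)) ^ b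
      * (Real.exp (-‖ξ‖ ^ 2) : ℂ))
      = fun ξ => ∑ j ∈ Finset.range (a + 1), ∑ k ∈ Finset.range (b + 1),
        ((a.choose j : ℂ) * (b.choose k : ℂ) * z ^ (a - j) * (starRingEnd ℂ z) ^ (b - k))
          * gwt j k ξ := funext fun ξ => expand_eq a b z ξ
  rw [h]
  apply integrable_finset_sum
  intro j _
  apply integrable_finset_sum
  intro k _
  exact (gwt_integrable j k).const_mul _

lemma berezin_monomial (s t : ℕ) (z : ℂ) :
    berezin2 (fun w => w ^ (s + t) * (starRingEnd ℂ w) ^ s) z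
    = ∑ k ∈ Finset.range (s + 1),
        ((2 : ℂ) * ((2 * Real.pi)⁻¹ : ℝ) * mu k k * ((s + t).choose k : ℂ) * (s.choose k : ℂ))
          * (z ^ ((s - k) + t) * (starRingEnd ℂ z) ^ (s - k)) := by
  unfold berezin2
  have h1 : ∀ ξ : ℂ, (fun w => w ^ (s + t) * (starRingEnd ℂ w) ^ s) (z + ξ)
      * (Real.exp (-‖ξ‖ ^ 2) : ℂ)
      = ∑ j ∈ Finset.range (s + t + 1), ∑ k ∈ Finset.range (s + 1),
        (((s + t).choose j : ℂ) * (s.choose k : ℂ) * z ^ (s + t - j)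
          * (starRingEnd ℂ z) ^ (s - k)) * gwt j k ξ := fun ξ => expand_eq (s + t) s z ξ
  simp_rw [h1]
  rw [integral_finset_sum _ (fun j _ => integrable_finset_sum _
    (fun k _ => (gwt_integrable j k).const_mul _))]
  have h2 : ∀ j, (∫ ξ : ℂ, ∑ k ∈ Finset.range (s + 1),
        (((s + t).choose j : ℂ) * (s.choose k : ℂ) * z ^ (s + t - j)
          * (starRingEnd ℂ z) ^ (s - k)) * gwt j k ξ)
      = ∑ k ∈ Finset.range (s + 1),
        (((s + t).choose j : ℂ) * (s.choose k : ℂ) * z ^ (s + t - j)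
          * (starRingEnd ℂ z) ^ (s - k)) * mu j k := by
    intro j
    rw [integral_finset_sum _ (fun k _ => (gwt_integrable j k).const_mul _)]
    exact Finset.sum_congr rfl fun k _ => MeasureTheory.integral_const_mul _ _
  simp_rw [h2]
  have h3 : ∑ j ∈ Finset.range (s + t + 1), ∑ k ∈ Finset.range (s + 1),
        (((s + t).choose j : ℂ) * (s.choose k : ℂ) * z ^ (s + t - j)
          * (starRingEnd ℂ z) ^ (s - k)) * mu j k
      = ∑ k ∈ Finset.range (s + 1),
        (((s + t).choose k : ℂ) * (s.choose k : ℂ) * z ^ (s + t - k)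
          * (starRingEnd ℂ z) ^ (s - k)) * mu k k := by
    rw [Finset.sum_comm]
    apply Finset.sum_congr rfl
    intro k hk
    apply Finset.sum_eq_single_of_mem k
      (Finset.mem_range.2 (by have := Finset.mem_range.1 hk; omega))
    intro j _ hne
    rw [mu_eq_zero hne, mul_zero]
  rw [h3, Finset.mul_sum]
  apply Finset.sum_congr rfl
  intro k hk
  have hks : k ≤ s := by have := Finset.mem_range.1 hk; omega
  have he : s + t - k = s - k + t := by omega
  rw [he]
  ring

lemma berezin_sum (t N : ℕ) (a : ℕ → ℂ) (z : ℂ) :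
    berezin2 (fun w => ∑ s ∈ Finset.range N, a s * w ^ (s + t) * (starRingEnd ℂ w) ^ s) z
    = ∑ s ∈ Finset.range N,
        a s * berezin2 (fun w => w ^ (s + t) * (starRingEnd ℂ w) ^ s) z := by
  unfold berezin2
  have h1 : ∀ ξ : ℂ,
      (fun w => ∑ s ∈ Finset.range N, a s * w ^ (s + t) * (starRingEnd ℂ w) ^ s) (z + ξ)
        * (Real.exp (-‖ξ‖ ^ 2) : ℂ)
      = ∑ s ∈ Finset.range N, a s * ((z + ξ) ^ (s + t) * (starRingEnd ℂ (z + ξ)) ^ s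
          * (Real.exp (-‖ξ‖ ^ 2) : ℂ)) := by
    intro ξ
    simp only
    rw [Finset.sum_mul]
    exact Finset.sum_congr rfl fun s _ => by ring
  simp_rw [h1]
  rw [integral_finset_sum _ (fun s _ => (integrable_expand (s + t) s z).const_mul (a s))]
  have h2 : ∀ s, (∫ ξ : ℂ, a s * ((z + ξ) ^ (s + t) * (starRingEnd ℂ (z + ξ)) ^ s
      * (Real.exp (-‖ξ‖ ^ 2) : ℂ)))
      = a s * ∫ ξ : ℂ, (z + ξ) ^ (s + t) * (starRingEnd ℂ (z + ξ)) ^ s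
        * (Real.exp (-‖ξ‖ ^ 2) : ℂ) := fun s => MeasureTheory.integral_const_mul _ _
  simp_rw [h2, Finset.mul_sum]
  exact Finset.sum_congr rfl fun s _ => by ring
def Mfun (τ : ℕ) (r s : ℕ) : ℂ :=
  if r ≤ s then
    (2 : ℂ) * ((2 * Real.pi)⁻¹ : ℝ) * mu (s - r) (s - r)
      * ((s + τ).choose (s - r) : ℂ) * (s.choose (s - r) : ℂ)
  else 0

def Tmap (n τ : ℕ) (a : ℕ → ℂ) (r : ℕ) : ℂ :=
  ∑ s ∈ Finset.range (n + 1), Mfun τ r s * a s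

lemma key (n τ : ℕ) (a : ℕ → ℂ) (z : ℂ) :
    berezin2 (fun w => ∑ s ∈ Finset.range (n + 1),
        a s * w ^ (s + τ) * (starRingEnd ℂ w) ^ s) z
    = ∑ r ∈ Finset.range (n + 1), Tmap n τ a r * z ^ (r + τ) * (starRingEnd ℂ z) ^ r := by
  rw [berezin_sum]
  simp_rw [berezin_monomial]
  symm
  calc ∑ r ∈ Finset.range (n + 1), Tmap n τ a r * z ^ (r + τ) * (starRingEnd ℂ z) ^ r
      = ∑ r ∈ Finset.range (n + 1), ∑ s ∈ Finset.range (n + 1),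
          Mfun τ r s * a s * z ^ (r + τ) * (starRingEnd ℂ z) ^ r := by
        apply Finset.sum_congr rfl
        intro r _
        unfold Tmap
        rw [Finset.sum_mul, Finset.sum_mul]
    _ = ∑ s ∈ Finset.range (n + 1), ∑ r ∈ Finset.range (n + 1),
          Mfun τ r s * a s * z ^ (r + τ) * (starRingEnd ℂ z) ^ r := Finset.sum_comm
    _ = ∑ s ∈ Finset.range (n + 1), a s * (∑ k ∈ Finset.range (s + 1),
          ((2 : ℂ) * ((2 * Real.pi)⁻¹ : ℝ) * mu k k * ((s + τ).choose k : ℂ)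
            * (s.choose k : ℂ)) * (z ^ ((s - k) + τ) * (starRingEnd ℂ z) ^ (s - k))) := by
        apply Finset.sum_congr rfl
        intro s hs
        have hsn : s + 1 ≤ n + 1 := by have := Finset.mem_range.1 hs; omega
        have hsub : ∑ r ∈ Finset.range (n + 1),
              Mfun τ r s * a s * z ^ (r + τ) * (starRingEnd ℂ z) ^ r
            = ∑ r ∈ Finset.range (s + 1),
              Mfun τ r s * a s * z ^ (r + τ) * (starRingEnd ℂ z) ^ r := by
          symm
          apply Finset.sum_subset (Finset.range_subset_range.2 hsn)
          intro r _ hr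
          have : ¬ r ≤ s := by have := Finset.mem_range.not.1 hr; omega
          rw [Mfun, if_neg this, zero_mul, zero_mul, zero_mul]
        rw [hsub, ← Finset.sum_range_reflect, Finset.mul_sum]
        apply Finset.sum_congr rfl
        intro k hk
        have hks : k ≤ s := by have := Finset.mem_range.1 hk; omega
        have h2 : s + 1 - 1 - k = s - k := by omega
        rw [h2, Mfun, if_pos (Nat.sub_le s k)]
        have h3 : s - (s - k) = k := by omega
        rw [h3]
        ring

lemma li (n τ : ℕ) (c : ℕ → ℂ)
    (h : ∀ z : ℂ, ∑ s ∈ Finset.range (n + 1),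
      c s * z ^ (s + τ) * (starRingEnd ℂ z) ^ s = 0) :
    ∀ s ∈ Finset.range (n + 1), c s = 0 := by
  set Q : Polynomial ℂ :=
    ∑ s ∈ Finset.range (n + 1), Polynomial.C (c s) * Polynomial.X ^ s with hQ
  have hroot : ∀ m : ℕ, Q.IsRoot ((((m + 1) ^ 2 : ℕ) : ℂ)) := by
    intro m
    have hz := h (((m + 1 : ℕ)) : ℂ)
    set z : ℂ := ((m + 1 : ℕ) : ℂ) with hzdef
    have hz0 : z ≠ 0 := by
      rw [hzdef]
      exact Nat.cast_ne_zero.2 (Nat.succ_ne_zero m)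
    have hconj : starRingEnd ℂ z = z := by rw [hzdef]; exact Complex.conj_natCast _
    rw [hconj] at hz
    have heval : Q.eval (z ^ 2) = ∑ s ∈ Finset.range (n + 1), c s * (z ^ 2) ^ s := by
      rw [hQ, Polynomial.eval_finset_sum]
      simp
    have hfact : ∀ s : ℕ, c s * z ^ (s + τ) * z ^ s = z ^ τ * (c s * (z ^ 2) ^ s) := by
      intro s
      have h1 : z ^ (s + τ) * z ^ s = z ^ (s + τ + s) := by rw [← pow_add]
      have h2 : s + τ + s = 2 * s + τ := by omega
      have h3 : z ^ (2 * s + τ) = (z ^ 2) ^ s * z ^ τ := by rw [pow_add, pow_mul]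
      calc c s * z ^ (s + τ) * z ^ s = c s * (z ^ (s + τ) * z ^ s) := by ring
        _ = c s * ((z ^ 2) ^ s * z ^ τ) := by rw [h1, h2, h3]
        _ = z ^ τ * (c s * (z ^ 2) ^ s) := by ring
    have hsum : z ^ τ * Q.eval (z ^ 2) = 0 := by
      rw [heval, Finset.mul_sum, ← hz]
      exact Finset.sum_congr rfl fun s _ => (hfact s).symm
    have hQz : Q.eval (z ^ 2) = 0 := by
      rcases mul_eq_zero.1 hsum with h' | h'
      · exact absurd h' (pow_ne_zero τ hz0)
      · exact h'
    have : (((m + 1) ^ 2 : ℕ) : ℂ) = z ^ 2 := by rw [hzdef]; push_cast; ring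
    rw [Polynomial.IsRoot, this]
    exact hQz
  have hinj : Function.Injective (fun m : ℕ => (((m + 1) ^ 2 : ℕ) : ℂ)) := by
    intro p q hpq
    have h1 : ((p + 1) ^ 2 : ℕ) = ((q + 1) ^ 2 : ℕ) := Nat.cast_injective hpq
    nlinarith [h1]
  have hQ0 : Q = 0 := Polynomial.eq_zero_of_infinite_isRoot Q
    (Set.infinite_of_injective_forall_mem hinj (fun m => hroot m))
  intro s hs
  have hc : Q.coeff s = c s := by
    rw [hQ, Polynomial.finset_sum_coeff]
    simp_rw [Polynomial.coeff_C_mul, Polynomial.coeff_X_pow, mul_ite, mul_one, mul_zero]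
    rw [Finset.sum_ite_eq (Finset.range (n + 1)) s c, if_pos hs]
  rw [hQ0, Polynomial.coeff_zero] at hc
  exact hc.symm
def Mmat (n τ : ℕ) : Matrix (Fin (n + 1)) (Fin (n + 1)) ℂ :=
  Matrix.of fun r s => Mfun τ (r : ℕ) (s : ℕ)

lemma Mmat_isUnit (n τ : ℕ) : IsUnit (Mmat n τ) := by
  rw [Matrix.isUnit_iff_isUnit_det]
  have htri : (Mmat n τ).BlockTriangular id := by
    intro i j hij
    have : ¬ (i : ℕ) ≤ (j : ℕ) := by
      have : (j : ℕ) < (i : ℕ) := hij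
      omega
    simp only [Mmat, Matrix.of_apply, Mfun, if_neg this]
  rw [Matrix.det_of_upperTriangular htri]
  apply isUnit_iff_ne_zero.2
  apply Finset.prod_ne_zero_iff.2
  intro i _
  have hd : Mmat n τ i i
      = (2 : ℂ) * ((2 * Real.pi)⁻¹ : ℝ) * mu 0 0 := by
    simp only [Mmat, Matrix.of_apply, Mfun, if_pos (le_refl (i : ℕ)), Nat.sub_self]
    simp
  rw [hd, mu_zero_zero]
  have hpi : (Real.pi : ℂ) ≠ 0 := by
    exact_mod_cast Real.pi_ne_zero
  have h2pi : (((2 * Real.pi)⁻¹ : ℝ) : ℂ) ≠ 0 := by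
    rw [ne_eq, Complex.ofReal_eq_zero, inv_eq_zero]
    exact mul_ne_zero two_ne_zero Real.pi_ne_zero
  exact mul_ne_zero (mul_ne_zero two_ne_zero h2pi) hpi

lemma Tmap_eq_mulVec (n τ : ℕ) (a : ℕ → ℂ) (x : Fin (n + 1) → ℂ)
    (hax : ∀ i : Fin (n + 1), a (i : ℕ) = x i) (r : Fin (n + 1)) :
    Tmap n τ a (r : ℕ) = (Mmat n τ).mulVec x r := by
  unfold Tmap
  rw [← Fin.sum_univ_eq_sum_range (fun s => Mfun τ (r : ℕ) s * a s) (n + 1)]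
  unfold Matrix.mulVec dotProduct
  apply Finset.sum_congr rfl
  intro i _
  rw [hax i]
  rfl
end BerezinAuxPost

theorem berezin2_bijOn (n τ : ℕ) :
    (∀ f ∈ Hspace n τ, berezin2 f ∈ Hspace n τ) ∧
    Set.BijOn berezin2 (Hspace n τ) (Hspace n τ) := by
  have hmaps : ∀ f ∈ Hspace n τ, berezin2 f ∈ Hspace n τ := by
    intro f hf
    obtain ⟨a, ha⟩ := hf
    have hfa : f = fun w => ∑ s ∈ Finset.range (n + 1),
        a s * w ^ (s + τ) * (starRingEnd ℂ w) ^ s := funext ha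
    refine ⟨Tmap n τ a, fun z => ?_⟩
    rw [hfa]
    exact key n τ a z
  have hinjmat := (Matrix.mulVec_injective_iff_isUnit).2 (Mmat_isUnit n τ)
  have hsurjmat := (Matrix.mulVec_surjective_iff_isUnit).2 (Mmat_isUnit n τ)
  refine ⟨hmaps, hmaps, ?_, ?_⟩
  · -- InjOn
    intro f hf g hg hfg
    obtain ⟨a, ha⟩ := hf
    obtain ⟨b, hb⟩ := hg
    have hfa : f = fun w => ∑ s ∈ Finset.range (n + 1),
        a s * w ^ (s + τ) * (starRingEnd ℂ w) ^ s := funext ha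
    have hgb : g = fun w => ∑ s ∈ Finset.range (n + 1),
        b s * w ^ (s + τ) * (starRingEnd ℂ w) ^ s := funext hb
    have hT : ∀ z : ℂ, ∑ r ∈ Finset.range (n + 1),
        Tmap n τ a r * z ^ (r + τ) * (starRingEnd ℂ z) ^ r
        = ∑ r ∈ Finset.range (n + 1),
        Tmap n τ b r * z ^ (r + τ) * (starRingEnd ℂ z) ^ r := by
      intro z
      rw [← key n τ a z, ← key n τ b z, ← hfa, ← hgb, hfg]
    have hzero : ∀ z : ℂ, ∑ r ∈ Finset.range (n + 1),
        (Tmap n τ a r - Tmap n τ b r) * z ^ (r + τ) * (starRingEnd ℂ z) ^ r = 0 := by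
      intro z
      have : ∑ r ∈ Finset.range (n + 1),
          (Tmap n τ a r - Tmap n τ b r) * z ^ (r + τ) * (starRingEnd ℂ z) ^ r
          = (∑ r ∈ Finset.range (n + 1),
              Tmap n τ a r * z ^ (r + τ) * (starRingEnd ℂ z) ^ r)
            - ∑ r ∈ Finset.range (n + 1),
              Tmap n τ b r * z ^ (r + τ) * (starRingEnd ℂ z) ^ r := by
        rw [← Finset.sum_sub_distrib]
        exact Finset.sum_congr rfl fun r _ => by ring
      rw [this, hT z, sub_self]
    have hTab := li n τ _ hzero
    have hmv : (Mmat n τ).mulVec (fun i => a (i : ℕ)) = (Mmat n τ).mulVec (fun i => b (i : ℕ)) := by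
      funext i
      rw [← Tmap_eq_mulVec n τ a (fun i => a (i : ℕ)) (fun _ => rfl) i,
        ← Tmap_eq_mulVec n τ b (fun i => b (i : ℕ)) (fun _ => rfl) i]
      have h1 := hTab (i : ℕ) (Finset.mem_range.2 i.isLt)
      have : Tmap n τ a (i : ℕ) = Tmap n τ b (i : ℕ) := by
        have := sub_eq_zero.1 h1
        exact this
      exact this
    have hab : (fun i : Fin (n + 1) => a (i : ℕ)) = fun i : Fin (n + 1) => b (i : ℕ) :=
      hinjmat hmv
    rw [hfa, hgb]
    funext z
    apply Finset.sum_congr rfl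
    intro s hs
    have hlt : s < n + 1 := Finset.mem_range.1 hs
    have : a s = b s := congrFun hab ⟨s, hlt⟩
    rw [this]
  · -- SurjOn
    intro g hg
    obtain ⟨b, hb⟩ := hg
    obtain ⟨x, hx⟩ := hsurjmat (fun i => b (i : ℕ))
    set a : ℕ → ℂ := fun s => if h : s < n + 1 then x ⟨s, h⟩ else 0 with hadef
    have hax : ∀ i : Fin (n + 1), a (i : ℕ) = x i := by
      intro i
      rw [hadef]
      simp only [dif_pos i.isLt, Fin.eta]
    refine ⟨fun w => ∑ s ∈ Finset.range (n + 1),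
        a s * w ^ (s + τ) * (starRingEnd ℂ w) ^ s, ⟨a, fun z => rfl⟩, ?_⟩
    funext z
    rw [key n τ a z]
    rw [show g z = ∑ s ∈ Finset.range (n + 1),
        b s * z ^ (s + τ) * (starRingEnd ℂ z) ^ s from hb z]
    apply Finset.sum_congr rfl
    intro r hr
    have hlt : r < n + 1 := Finset.mem_range.1 hr
    have h1 : Tmap n τ a r = (Mmat n τ).mulVec x ⟨r, hlt⟩ :=
      Tmap_eq_mulVec n τ a x hax ⟨r, hlt⟩
    have h2 : (Mmat n τ).mulVec x ⟨r, hlt⟩ = b r := congrFun hx ⟨r, hlt⟩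
    rw [h1, h2]
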